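/- Let m ≥ 1, let O ⊆ ℝ^m be an open set, and let f : O → ℝ be of class C². Let Y = (y₀, y₁, ..., y_m) be a poised tuple of points centred at y₀ ∈ O, set Δ = max_{1≤i≤m} ‖y_i − y₀‖, and suppose the closed ball B(y₀; Δ) is contained in O and that ∇f is K_f-Lipschitz on B(y₀; Δ). Let F be the linear interpolation model of f over Y. Then for every y ∈ B(y₀; Δ): ‖∇f(y) − ∇F(y)‖ ≤ K_f·(1 + √m·‖L̂⁻¹‖/2)·Δ. -/

import Mathlib

set_option synthInstance.maxHeartbeats 1000000
set_option maxHeartbeats 1000000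

open scoped RealInnerProductSpace

/-- A tuple `Y = (y₀, …, y_m)` of points of `ℝ^m` is poised if the `(m+1)×(m+1)` matrix
whose `i`-th row is `(1, yᵢ)` is invertible. -/
def Poised {m : ℕ} (Y : Fin (m + 1) → EuclideanSpace ℝ (Fin m)) : Prop :=
  (Matrix.of fun i : Fin (m + 1) => Fin.cons (1 : ℝ) (fun j : Fin m => Y i j)).det ≠ 0

/-- The spectral norm of a square real matrix, i.e. the operator norm of the induced
map on Euclidean space. -/
noncomputable def specNorm {n : ℕ} (M : Matrix (Fin n) (Fin n) ℝ) : ℝ :=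
  ‖(Matrix.toEuclideanCLM (𝕜 := ℝ) M :
      EuclideanSpace ℝ (Fin n) →L[ℝ] EuclideanSpace ℝ (Fin n))‖

/-- The matrix `L(Y)` whose `i`-th row is `yᵢ - y₀`, for `i = 1, …, m`. -/
noncomputable def Lmat {m : ℕ} (Y : Fin (m + 1) → EuclideanSpace ℝ (Fin m)) :
    Matrix (Fin m) (Fin m) ℝ :=
  Matrix.of fun i j : Fin m => (Y i.succ - Y 0) j

theorem Lmat_det_ne_zero {m : ℕ} {Y : Fin (m + 1) → EuclideanSpace ℝ (Fin m)}
    (h : Poised Y) : (Lmat Y).det ≠ 0 := by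
  intro hdet
  obtain ⟨v, hv0, hvL⟩ := Matrix.exists_vecMul_eq_zero_iff.mpr hdet
  apply h
  rw [← Matrix.exists_vecMul_eq_zero_iff]
  refine ⟨Fin.cons (-(∑ i, v i)) v, ?_, ?_⟩
  · intro hw
    apply hv0
    funext i
    have := congrFun hw i.succ
    simpa using this
  · funext j
    rcases Fin.eq_zero_or_eq_succ j with rfl | ⟨k, rfl⟩
    · simp [Matrix.vecMul, dotProduct, Fin.sum_cons]
    · have := congrFun hvL k
      simp only [Matrix.vecMul, dotProduct, Lmat, Matrix.of_apply,
        Pi.zero_apply] at this ⊢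
      rw [Fin.sum_univ_succ]
      simp only [Fin.cons_succ, Fin.cons_zero, Matrix.of_apply]
      have h2 : ∑ x : Fin m, (v x * Y x.succ k - v x * Y 0 k) = 0 := by
        have := this
        simp only [PiLp.sub_apply, mul_sub] at this ⊢
        exact this
      rw [Finset.sum_sub_distrib, sub_eq_zero, ← Finset.sum_mul] at h2
      linarith [h2]

theorem taylor_bound {m : ℕ} {O : Set (EuclideanSpace ℝ (Fin m))} (hO : IsOpen O)
    {f : EuclideanSpace ℝ (Fin m) → ℝ} (hf : ContDiffOn ℝ 2 f O)
    {c : EuclideanSpace ℝ (Fin m)} {Δ K : ℝ} (hK : 0 ≤ K)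
    (hball : Metric.closedBall c Δ ⊆ O)
    (hLip : ∀ x ∈ Metric.closedBall c Δ, ∀ y ∈ Metric.closedBall c Δ,
      ‖gradient f x - gradient f y‖ ≤ K * ‖x - y‖)
    {z : EuclideanSpace ℝ (Fin m)} (hz : z ∈ Metric.closedBall c Δ) :
    |f z - f c - ⟪gradient f c, z - c⟫| ≤ K / 2 * ‖z - c‖ ^ 2 := by
  set v := z - c with hv
  set γ : ℝ → EuclideanSpace ℝ (Fin m) := fun t => c + t • v with hγdef
  have hγmem : ∀ t ∈ Set.Icc (0:ℝ) 1, γ t ∈ Metric.closedBall c Δ := by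
    intro t ht
    have hzball := Metric.mem_closedBall.mp hz
    rw [Metric.mem_closedBall]
    have : dist (γ t) c = |t| * ‖v‖ := by
      rw [dist_eq_norm]; simp [hγdef, norm_smul, Real.norm_eq_abs]
    rw [this, abs_of_nonneg ht.1]
    calc t * ‖v‖ ≤ 1 * ‖v‖ := by
          apply mul_le_mul_of_nonneg_right ht.2 (norm_nonneg v)
      _ = ‖v‖ := one_mul _
      _ ≤ Δ := by rwa [hv, ← dist_eq_norm]
  have hgrad : ∀ p ∈ O, HasGradientAt f (gradient f p) p := by
    intro p hp
    exact DifferentiableAt.hasGradientAt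
      (((hf.differentiableOn (by norm_num)) p hp).differentiableAt (hO.mem_nhds hp))
  set φ : ℝ → ℝ := fun t => ⟪gradient f (γ t), v⟫ with hφdef
  have hderiv : ∀ t ∈ Set.Icc (0:ℝ) 1, HasDerivAt (fun t => f (γ t)) (φ t) t := by
    intro t ht
    have hγd : HasDerivAt γ v t := by
      have h := ((hasDerivAt_id t).smul_const v).const_add c
      rw [one_smul] at h
      exact h
    have hfd := (hgrad (γ t) (hball (hγmem t ht))).hasFDerivAt
    have := hfd.comp_hasDerivAt t hγd
    simpa [hφdef, InnerProductSpace.toDual_apply_apply, Function.comp_def] using this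
  have hφlip : ∀ s ∈ Set.Icc (0:ℝ) 1, ∀ t ∈ Set.Icc (0:ℝ) 1,
      |φ t - φ s| ≤ K * ‖v‖ ^ 2 * |t - s| := by
    intro s hs t ht
    have h1 : φ t - φ s = ⟪gradient f (γ t) - gradient f (γ s), v⟫ := by
      rw [inner_sub_left]
    rw [h1]
    calc |⟪gradient f (γ t) - gradient f (γ s), v⟫|
        ≤ ‖gradient f (γ t) - gradient f (γ s)‖ * ‖v‖ := abs_real_inner_le_norm _ _
      _ ≤ (K * ‖γ t - γ s‖) * ‖v‖ := by
          apply mul_le_mul_of_nonneg_right (hLip _ (hγmem t ht) _ (hγmem s hs)) (norm_nonneg v)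
      _ = K * ‖v‖ ^ 2 * |t - s| := by
          have : γ t - γ s = (t - s) • v := by
            module
          rw [this, norm_smul, Real.norm_eq_abs]; ring
  have hφcont : ContinuousOn φ (Set.Icc (0:ℝ) 1) := by
    apply LipschitzOnWith.continuousOn (K := Real.toNNReal (K * ‖v‖ ^ 2))
    rw [lipschitzOnWith_iff_dist_le_mul]
    intro t ht s hs
    rw [Real.dist_eq, Real.dist_eq, Real.coe_toNNReal _ (by positivity)]
    exact hφlip s hs t ht
  have hint : IntervalIntegrable φ MeasureTheory.volume 0 1 := by
    apply hφcont.intervalIntegrable_of_Icc zero_le_one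
  have hFTC : f z - f c = ∫ t in (0:ℝ)..1, φ t := by
    have := intervalIntegral.integral_eq_sub_of_hasDerivAt (f := fun t => f (γ t))
      (f' := φ) (a := 0) (b := 1) (fun t ht => hderiv t (by rwa [Set.uIcc_of_le zero_le_one] at ht)) hint
    rw [this]
    congr 1 <;> simp [hγdef, hv]
  have key : f z - f c - ⟪gradient f c, v⟫ = ∫ t in (0:ℝ)..1, (φ t - φ 0) := by
    rw [intervalIntegral.integral_sub hint intervalIntegrable_const,
      intervalIntegral.integral_const]
    have hφ0 : φ 0 = ⟪gradient f c, v⟫ := by simp [hφdef, hγdef]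
    rw [← hFTC, hφ0]; ring_nf
  rw [key]
  have hval : (∫ t in (0:ℝ)..1, K * ‖v‖ ^ 2 * t) = K * ‖v‖ ^ 2 / 2 := by
    rw [intervalIntegral.integral_const_mul, integral_id]; ring
  have hbound : |∫ t in (0:ℝ)..1, (φ t - φ 0)| ≤ |∫ t in (0:ℝ)..1, K * ‖v‖ ^ 2 * t| := by
    rw [← Real.norm_eq_abs (∫ t in (0:ℝ)..1, (φ t - φ 0))]
    apply intervalIntegral.norm_integral_le_abs_of_norm_le
    · filter_upwards [MeasureTheory.ae_restrict_mem measurableSet_uIoc] with t ht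
      rw [Set.uIoc_of_le zero_le_one] at ht
      have ht' : t ∈ Set.Icc (0:ℝ) 1 := ⟨le_of_lt ht.1, ht.2⟩
      have := hφlip 0 (by norm_num) t ht'
      rw [Real.norm_eq_abs]
      simpa [abs_of_nonneg ht'.1] using this
    · apply ContinuousOn.intervalIntegrable
      exact (continuous_const.mul continuous_id).continuousOn
  refine hbound.trans ?_
  rw [hval, abs_of_nonneg (by positivity)]
  nlinarith [sq_nonneg (‖v‖)]

theorem grad_diff_bound {m : ℕ} (hm : 1 ≤ m) (Y : Fin (m + 1) → EuclideanSpace ℝ (Fin m))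
    (Δ : ℝ) (hΔpos : 0 < Δ) (hdet : (Lmat Y).det ≠ 0)
    (a g0 : EuclideanSpace ℝ (Fin m)) (Kf : ℝ) (hKf0 : 0 ≤ Kf)
    (hr : ∀ i : Fin m, |⟪a - g0, Y i.succ - Y 0⟫| ≤ Kf / 2 * Δ ^ 2) :
    ‖a - g0‖ ≤ Kf * Real.sqrt m * specNorm (Δ⁻¹ • Lmat Y)⁻¹ * Δ / 2 := by
  have hΔ0 : (0:ℝ) ≤ Δ := hΔpos.le
  have hu : IsUnit (Lmat Y).det := isUnit_iff_ne_zero.mpr hdet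
  set r : Fin m → ℝ := fun i => ⟪a - g0, Y i.succ - Y 0⟫ with hrdef
  have hLw : Matrix.mulVec (Lmat Y) (fun j => (a - g0) j) = r := by
    funext i
    simp only [hrdef, Matrix.mulVec, dotProduct, Lmat, Matrix.of_apply,
      PiLp.inner_apply, RCLike.inner_apply, conj_trivial]
  have hw : (fun j => (a - g0) j) = Matrix.mulVec (Lmat Y)⁻¹ r := by
    rw [← hLw, Matrix.mulVec_mulVec, Matrix.nonsing_inv_mul _ hu, Matrix.one_mulVec]
  set rv : EuclideanSpace ℝ (Fin m) := (WithLp.equiv 2 (Fin m → ℝ)).symm r with hrvdef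
  have hrv_norm : ‖rv‖ ≤ Real.sqrt m * (Kf / 2 * Δ ^ 2) := by
    rw [EuclideanSpace.norm_eq]
    have h1 : ∑ i, ‖rv i‖ ^ 2 ≤ ∑ _i : Fin m, (Kf / 2 * Δ ^ 2) ^ 2 := by
      apply Finset.sum_le_sum
      intro i _
      rw [Real.norm_eq_abs]
      exact pow_le_pow_left₀ (abs_nonneg _) (hr i) 2
    refine (Real.sqrt_le_sqrt h1).trans ?_
    rw [Finset.sum_const, Finset.card_univ, Fintype.card_fin, nsmul_eq_mul,
      Real.sqrt_mul (by positivity), Real.sqrt_sq (by positivity)]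
  have hCLM : (Matrix.toEuclideanCLM (𝕜 := ℝ) (Lmat Y)⁻¹) rv
      = (WithLp.equiv 2 (Fin m → ℝ)).symm (Matrix.mulVec (Lmat Y)⁻¹ r) :=
    Matrix.toEuclideanCLM_toLp _ r
  have hwnorm : ‖a - g0‖ ≤ specNorm (Lmat Y)⁻¹ * ‖rv‖ := by
    have h := (Matrix.toEuclideanCLM (𝕜 := ℝ) (Lmat Y)⁻¹).le_opNorm rv
    rw [hCLM, ← hw] at h
    exact h
  have hscale : (Δ⁻¹ • Lmat Y)⁻¹ = Δ • (Lmat Y)⁻¹ := by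
    apply Matrix.inv_eq_right_inv
    rw [Matrix.smul_mul, Matrix.mul_smul, smul_smul, Matrix.mul_nonsing_inv _ hu,
      inv_mul_cancel₀ hΔpos.ne', one_smul]
  have hsn : specNorm (Δ⁻¹ • Lmat Y)⁻¹ = Δ * specNorm (Lmat Y)⁻¹ := by
    rw [hscale]
    unfold specNorm
    rw [_root_.map_smul]
    have := norm_smul (α := ℝ) Δ (Matrix.toEuclideanCLM (𝕜 := ℝ) (Lmat Y)⁻¹ :
      EuclideanSpace ℝ (Fin m) →L[ℝ] EuclideanSpace ℝ (Fin m))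
    rw [this, Real.norm_eq_abs, abs_of_nonneg hΔ0]
  have hs0 : (0:ℝ) ≤ specNorm (Lmat Y)⁻¹ := norm_nonneg _
  calc ‖a - g0‖ ≤ specNorm (Lmat Y)⁻¹ * ‖rv‖ := hwnorm
    _ ≤ specNorm (Lmat Y)⁻¹ * (Real.sqrt m * (Kf / 2 * Δ ^ 2)) :=
        mul_le_mul_of_nonneg_left hrv_norm hs0
    _ = Kf * Real.sqrt m * (Δ * specNorm (Lmat Y)⁻¹) * Δ / 2 := by ring
    _ = Kf * Real.sqrt m * specNorm (Δ⁻¹ • Lmat Y)⁻¹ * Δ / 2 := by rw [hsn]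

theorem linear_interpolation_gradient_error_bound {m : ℕ} (hm : 1 ≤ m)
    (O : Set (EuclideanSpace ℝ (Fin m))) (hOopen : IsOpen O)
    (f : EuclideanSpace ℝ (Fin m) → ℝ) (hf : ContDiffOn ℝ 2 f O)
    (Y : Fin (m + 1) → EuclideanSpace ℝ (Fin m)) (hY0 : Y 0 ∈ O) (hpoised : Poised Y)
    (Δ : ℝ) (hΔ : IsGreatest (Set.range fun i : Fin m => ‖Y i.succ - Y 0‖) Δ)
    (hball : Metric.closedBall (Y 0) Δ ⊆ O)
    (Kf : ℝ) (hKf0 : 0 ≤ Kf)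
    (hLip : ∀ x ∈ Metric.closedBall (Y 0) Δ, ∀ y ∈ Metric.closedBall (Y 0) Δ,
      ‖gradient f x - gradient f y‖ ≤ Kf * ‖x - y‖)
    (F : EuclideanSpace ℝ (Fin m) → ℝ)
    (hFaff : ∃ (a₀ : ℝ) (a : EuclideanSpace ℝ (Fin m)), F = fun x => a₀ + ⟪a, x⟫)
    (hFinterp : ∀ i, F (Y i) = f (Y i)) :
    ∀ y ∈ Metric.closedBall (Y 0) Δ,
      ‖gradient f y - gradient F y‖ ≤
        Kf * (1 + Real.sqrt (m : ℝ) * specNorm (Δ⁻¹ • Lmat Y)⁻¹ / 2) * Δ := by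
  intro y hy
  obtain ⟨a₀, a, rfl⟩ := hFaff
  have hgradF : ∀ x, gradient (fun x => a₀ + ⟪a, x⟫) x = a := by
    intro x
    apply HasGradientAt.gradient
    rw [hasGradientAt_iff_hasFDerivAt]
    have heq : (fun x : EuclideanSpace ℝ (Fin m) => a₀ + ⟪a, x⟫)
        = fun x => a₀ + (InnerProductSpace.toDual ℝ (EuclideanSpace ℝ (Fin m)) a) x := by
      funext x; simp [InnerProductSpace.toDual_apply_apply]
    rw [heq]
    exact ((InnerProductSpace.toDual ℝ (EuclideanSpace ℝ (Fin m)) a) :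
      EuclideanSpace ℝ (Fin m) →L[ℝ] ℝ).hasFDerivAt.const_add a₀
  obtain ⟨i₀, hi₀⟩ := hΔ.1
  have hΔ0 : 0 ≤ Δ := hi₀ ▸ norm_nonneg _
  have hdet := Lmat_det_ne_zero hpoised
  have hΔpos : 0 < Δ := by
    rcases hΔ0.lt_or_eq with h | h
    · exact h
    exfalso
    apply hdet
    have hL0 : Lmat Y = 0 := by
      ext i j
      have hle : ‖Y i.succ - Y 0‖ ≤ Δ := hΔ.2 ⟨i, rfl⟩
      rw [← h] at hle
      have h0 : Y i.succ - Y 0 = 0 := by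
        have := le_antisymm hle (norm_nonneg _)
        rwa [norm_eq_zero] at this
      have hj : (Y i.succ - Y 0) j = 0 := by rw [h0]; rfl
      simpa [Lmat] using hj
    have hne : Nonempty (Fin m) := ⟨⟨0, hm⟩⟩
    rw [hL0]
    exact Matrix.det_zero
  set g0 := gradient f (Y 0) with hg0
  have hr : ∀ i : Fin m, |⟪a - g0, Y i.succ - Y 0⟫| ≤ Kf / 2 * Δ ^ 2 := by
    intro i
    have hle : ‖Y i.succ - Y 0‖ ≤ Δ := hΔ.2 ⟨i, rfl⟩
    have hmem : Y i.succ ∈ Metric.closedBall (Y 0) Δ := by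
      rw [Metric.mem_closedBall, dist_eq_norm]; exact hle
    have htay := taylor_bound hOopen hf hKf0 hball hLip hmem
    have hFi : f (Y i.succ) - f (Y 0) = ⟪a, Y i.succ - Y 0⟫ := by
      rw [← hFinterp i.succ, ← hFinterp 0]
      simp [inner_sub_right]
    have heq : ⟪a - g0, Y i.succ - Y 0⟫ = f (Y i.succ) - f (Y 0) - ⟪g0, Y i.succ - Y 0⟫ := by
      rw [inner_sub_left, hFi]
    rw [heq]
    refine htay.trans ?_
    refine mul_le_mul_of_nonneg_left ?_ (by positivity)
    exact pow_le_pow_left₀ (norm_nonneg _) hle 2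
  have hkey := grad_diff_bound hm Y Δ hΔpos hdet a g0 Kf hKf0 hr
  have h2 : ‖gradient f y - g0‖ ≤ Kf * Δ := by
    have := hLip y hy (Y 0) (Metric.mem_closedBall_self hΔ0)
    refine this.trans ?_
    have : ‖y - Y 0‖ ≤ Δ := by rw [← dist_eq_norm]; exact Metric.mem_closedBall.mp hy
    exact mul_le_mul_of_nonneg_left this hKf0
  have h1 : ‖gradient f y - a‖ ≤ ‖gradient f y - g0‖ + ‖a - g0‖ := by
    have heq : gradient f y - a = (gradient f y - g0) - (a - g0) := by abel
    rw [heq]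
    exact norm_sub_le _ _
  rw [hgradF y]
  have hrhs : Kf * (1 + Real.sqrt (m : ℝ) * specNorm (Δ⁻¹ • Lmat Y)⁻¹ / 2) * Δ
      = Kf * Δ + Kf * Real.sqrt m * specNorm (Δ⁻¹ • Lmat Y)⁻¹ * Δ / 2 := by ring
  rw [hrhs]
  linarith
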